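/- Let r ≥ 2 be an integer. There exists a constant C > 0, depending only on r, such that for every r×r complex matrix A and every real B > 0: if every eigenvalue α of A satisfies |α| < B, and ‖A‖² ≥ 2rB², then ‖[A,Aᴴ]‖ ≥ C·‖A‖². -/

import Mathlib

/-- The Frobenius (Hilbert–Schmidt) norm of a complex matrix. -/
noncomputable def frobNorm {r : ℕ} (A : Matrix (Fin r) (Fin r) ℂ) : ℝ :=
  Real.sqrt (∑ i, ∑ j, ‖A i j‖ ^ 2)

namespace CommLB

open Matrix Polynomial ENNReal Pointwise
open scoped NNReal

variable {r : ℕ}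

lemma frobSq_nonneg (A : Matrix (Fin r) (Fin r) ℂ) :
    0 ≤ ∑ i, ∑ j, ‖A i j‖ ^ 2 :=
  Finset.sum_nonneg fun _ _ => Finset.sum_nonneg fun _ _ => sq_nonneg _

lemma frobNorm_nonneg (A : Matrix (Fin r) (Fin r) ℂ) : 0 ≤ frobNorm A :=
  Real.sqrt_nonneg _

lemma frobNorm_sq (A : Matrix (Fin r) (Fin r) ℂ) :
    frobNorm A ^ 2 = ∑ i, ∑ j, ‖A i j‖ ^ 2 :=
  Real.sq_sqrt (frobSq_nonneg A)

lemma frobNorm_smul (t : ℝ) (A : Matrix (Fin r) (Fin r) ℂ) :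
    frobNorm ((t : ℂ) • A) = |t| * frobNorm A := by
  unfold frobNorm
  rw [← Real.sqrt_sq_eq_abs, ← Real.sqrt_mul (sq_nonneg t)]
  congr 1
  rw [Finset.mul_sum]
  refine Finset.sum_congr rfl fun i _ => ?_
  rw [Finset.mul_sum]
  refine Finset.sum_congr rfl fun j _ => ?_
  simp [Matrix.smul_apply, norm_mul, mul_pow, Complex.norm_real, Real.norm_eq_abs, sq_abs]

lemma eq_zero_of_frobNorm_eq_zero {A : Matrix (Fin r) (Fin r) ℂ}
    (h : frobNorm A = 0) : A = 0 := by
  have hsum : ∑ i, ∑ j, ‖A i j‖ ^ 2 = 0 := by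
    have := frobNorm_sq A
    rw [h] at this
    simpa using this.symm
  ext i j
  have h1 : ∀ i ∈ (Finset.univ : Finset (Fin r)),
      ∑ j, ‖A i j‖ ^ 2 = 0 :=
    (Finset.sum_eq_zero_iff_of_nonneg fun _ _ =>
      Finset.sum_nonneg fun _ _ => sq_nonneg _).mp hsum
  have h2 : ∀ j ∈ (Finset.univ : Finset (Fin r)), ‖A i j‖ ^ 2 = 0 :=
    (Finset.sum_eq_zero_iff_of_nonneg fun _ _ => sq_nonneg _).mp (h1 i (Finset.mem_univ i))
  have := h2 j (Finset.mem_univ j)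
  have : ‖A i j‖ = 0 := sq_eq_zero_iff.mp this
  simpa using this

lemma eval_charpoly (A : Matrix (Fin r) (Fin r) ℂ) (z : ℂ) :
    A.charpoly.eval z = (z • (1 : Matrix (Fin r) (Fin r) ℂ) - A).det := by
  rw [Matrix.charpoly, ← Polynomial.coe_evalRingHom, RingHom.map_det]
  congr 1
  ext i j
  by_cases h : i = j
  · subst h
    simp [Matrix.charmatrix_apply_eq, Matrix.one_apply_eq]
  · simp [Matrix.charmatrix_apply_ne _ _ _ h, Matrix.one_apply_ne h]

lemma mem_spectrum_iff_det {A : Matrix (Fin r) (Fin r) ℂ} {z : ℂ} :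
    z ∈ spectrum ℂ A ↔ (z • (1 : Matrix (Fin r) (Fin r) ℂ) - A).det = 0 := by
  rw [spectrum.mem_iff, Algebra.algebraMap_eq_smul_one]
  rw [Matrix.isUnit_iff_isUnit_det, isUnit_iff_ne_zero, not_not]

lemma pow_card_le_prod (s : Multiset ℝ) {t : ℝ} (ht : 0 ≤ t)
    (h : ∀ x ∈ s, t ≤ x) : t ^ (Multiset.card s) ≤ s.prod := by
  induction s using Multiset.induction with
  | empty => simp
  | cons a s ih =>
    simp only [Multiset.card_cons, Multiset.prod_cons, pow_succ]
    have ha : t ≤ a := h a (Multiset.mem_cons_self a s)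
    have hs : t ^ (Multiset.card s) ≤ s.prod :=
      ih fun x hx => h x (Multiset.mem_cons_of_mem hx)
    calc t ^ Multiset.card s * t ≤ s.prod * a := by
          apply mul_le_mul hs ha ht
          exact le_trans (pow_nonneg ht _) hs
      _ = a * s.prod := mul_comm _ _

lemma det_lower_bound (A : Matrix (Fin r) (Fin r) ℂ) {c : ℝ} (hc : 0 ≤ c)
    (hspec : ∀ α ∈ spectrum ℂ A, ‖α‖ ≤ c) {z : ℂ}
    (hz : c < ‖z‖) :
    (‖z‖ - c) ^ r ≤ ‖(z • (1 : Matrix (Fin r) (Fin r) ℂ) - A).det‖ := by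
  set M := z • (1 : Matrix (Fin r) (Fin r) ℂ) - A with hM
  have hdet : M.det = M.charpoly.roots.prod := Matrix.det_eq_prod_roots_charpoly M
  have habs : ‖M.det‖ = (M.charpoly.roots.map (fun x => ‖x‖)).prod := by
    rw [hdet]; exact map_multiset_prod (normHom (α := ℂ)) _
  have hcard : Multiset.card (M.charpoly.roots.map (fun x => ‖x‖)) = r := by
    rw [Multiset.card_map]
    rw [splits_iff_card_roots.mp (IsAlgClosed.splits M.charpoly)]
    rw [Matrix.charpoly_natDegree_eq_dim]
    simp
  rw [habs]
  calc (‖z‖ - c) ^ r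
      = (‖z‖ - c) ^ (Multiset.card (M.charpoly.roots.map (fun x => ‖x‖))) := by rw [hcard]
    _ ≤ _ := ?_
  apply pow_card_le_prod _ (by linarith)
  intro x hx
  obtain ⟨μ, hμ, rfl⟩ := Multiset.mem_map.mp hx
  have hroot : M.charpoly.eval μ = 0 := by
    have hne : M.charpoly ≠ 0 := (Matrix.charpoly_monic M).ne_zero
    exact (Polynomial.mem_roots hne).mp hμ
  have hdet0 : (μ • (1 : Matrix (Fin r) (Fin r) ℂ) - M).det = 0 := by
    rw [← eval_charpoly]; exact hroot
  have hrearr : μ • (1 : Matrix (Fin r) (Fin r) ℂ) - M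
      = -((z - μ) • (1 : Matrix (Fin r) (Fin r) ℂ) - A) := by
    rw [hM, sub_smul]; abel
  have hdet0' : ((z - μ) • (1 : Matrix (Fin r) (Fin r) ℂ) - A).det = 0 := by
    rw [hrearr, Matrix.det_neg] at hdet0
    rcases mul_eq_zero.mp hdet0 with h | h
    · exact absurd h (by simp [pow_ne_zero])
    · exact h
  have hmem : (z - μ) ∈ spectrum ℂ A := mem_spectrum_iff_det.mpr hdet0'
  have := hspec _ hmem
  have htri : ‖z‖ ≤ ‖z - μ‖ + ‖μ‖ := by
    calc ‖z‖ = ‖(z - μ) + μ‖ := by ring_nf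
      _ ≤ ‖z - μ‖ + ‖μ‖ := norm_add_le _ _
  linarith

section Normal

attribute [local instance] Matrix.instL2OpMetricSpace Matrix.instL2OpNormedAddCommGroup
  Matrix.instL2OpNormedRing Matrix.instL2OpNormedSpace Matrix.instL2OpNormedAlgebra
  Matrix.instCStarRing

noncomputable local instance cstarMatrix : CStarAlgebra (Matrix (Fin r) (Fin r) ℂ) :=
  Matrix.instCStarAlgebra

lemma l2_norm_le_of_spectrum {A : Matrix (Fin r) (Fin r) ℂ}
    (hA : A * A.conjTranspose = A.conjTranspose * A) {c : ℝ} (hc : 0 ≤ c)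
    (hspec : ∀ α ∈ spectrum ℂ A, ‖α‖ ≤ c) : ‖A‖ ≤ c := by
  haveI : IsStarNormal A := ⟨by
    rw [Matrix.star_eq_conjTranspose]
    exact hA.symm⟩
  have hrad := IsStarNormal.spectralRadius_eq_nnnorm A
  set cnn : ℝ≥0 := ⟨c, hc⟩ with hcnn
  have hle : spectralRadius ℂ A ≤ (cnn : ℝ≥0∞) := by
    refine iSup₂_le fun k hk => ?_
    have : ‖k‖₊ ≤ cnn := by
      rw [← NNReal.coe_le_coe]
      exact hspec k hk
    exact_mod_cast this
  rw [hrad] at hle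
  have : ‖A‖₊ ≤ cnn := by exact_mod_cast hle
  exact_mod_cast this

lemma col_sq_le_l2_norm (A : Matrix (Fin r) (Fin r) ℂ) (j : Fin r) :
    ∑ i, ‖A i j‖ ^ 2 ≤ ‖A‖ ^ 2 := by
  set x : EuclideanSpace ℂ (Fin r) := EuclideanSpace.single j 1 with hx
  set y := Matrix.toEuclideanCLM (n := Fin r) (𝕜 := ℂ) A x with hy
  have hyi : ∀ i, y i = A i j := by
    intro i
    have := Matrix.ofLp_toEuclideanCLM (n := Fin r) (𝕜 := ℂ) A x
    have hyi' : y i = (WithLp.ofLp y) i := rfl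
    rw [hyi', this]
    simp [Matrix.toLin'_apply, Matrix.mulVec, dotProduct, hx,
      EuclideanSpace.single_apply, Pi.single_apply]
  have hnorm_y : ‖y‖ ^ 2 = ∑ i, ‖A i j‖ ^ 2 := by
    rw [EuclideanSpace.norm_eq, Real.sq_sqrt (by positivity)]
    refine Finset.sum_congr rfl fun i _ => ?_
    rw [hyi i]
  have hxnorm : ‖x‖ = 1 := by
    rw [hx, EuclideanSpace.norm_single]
    simp
  have hle : ‖y‖ ≤ ‖A‖ := by
    calc ‖y‖ ≤ ‖Matrix.toEuclideanCLM (n := Fin r) (𝕜 := ℂ) A‖ * ‖x‖ :=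
          (Matrix.toEuclideanCLM (n := Fin r) (𝕜 := ℂ) A).le_opNorm x
      _ = ‖A‖ := by rw [hxnorm, mul_one]; rfl
  rw [← hnorm_y]
  exact pow_le_pow_left₀ (norm_nonneg _) hle 2

lemma normal_frobSq_le {A : Matrix (Fin r) (Fin r) ℂ}
    (hA : A * A.conjTranspose = A.conjTranspose * A) {c : ℝ} (hc : 0 ≤ c)
    (hspec : ∀ α ∈ spectrum ℂ A, ‖α‖ ≤ c) :
    ∑ i, ∑ j, ‖A i j‖ ^ 2 ≤ r * c ^ 2 := by
  have hnorm := l2_norm_le_of_spectrum hA hc hspec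
  calc ∑ i, ∑ j, ‖A i j‖ ^ 2
      = ∑ j, ∑ i, ‖A i j‖ ^ 2 := Finset.sum_comm
    _ ≤ ∑ _j : Fin r, ‖A‖ ^ 2 := Finset.sum_le_sum fun j _ => col_sq_le_l2_norm A j
    _ = r * ‖A‖ ^ 2 := by simp [mul_comm]
    _ ≤ r * c ^ 2 := by
        have : ‖A‖ ^ 2 ≤ c ^ 2 := pow_le_pow_left₀ (norm_nonneg _) hnorm 2
        exact mul_le_mul_of_nonneg_left this (by positivity)

end Normal

lemma continuous_frobNorm : Continuous (frobNorm (r := r)) := by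
  apply Real.continuous_sqrt.comp
  apply continuous_finset_sum
  intro i _
  apply continuous_finset_sum
  intro j _
  exact (continuous_norm.comp (continuous_id.matrix_elem i j)).pow 2

lemma continuous_comm : Continuous (fun A : Matrix (Fin r) (Fin r) ℂ =>
    frobNorm (A * A.conjTranspose - A.conjTranspose * A)) := by
  apply continuous_frobNorm.comp
  exact ((continuous_id.matrix_mul continuous_id.matrix_conjTranspose).sub
    ((continuous_id.matrix_conjTranspose).matrix_mul continuous_id))

lemma isCompact_entries_le :
    IsCompact {A : Matrix (Fin r) (Fin r) ℂ | ∀ i j, ‖A i j‖ ≤ 1} := by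
  have h : {A : Matrix (Fin r) (Fin r) ℂ | ∀ i j, ‖A i j‖ ≤ 1} =
      Set.pi Set.univ (fun _ : Fin r => Set.pi Set.univ
        (fun _ : Fin r => Metric.closedBall (0 : ℂ) 1)) := by
    ext A
    constructor
    · intro hA
      intro i _
      intro j _
      simpa using hA i j
    · intro hA i j
      have := hA i (Set.mem_univ i) j (Set.mem_univ j)
      simpa using this
  rw [h]
  exact isCompact_univ_pi fun _ => isCompact_univ_pi fun _ => isCompact_closedBall 0 1

end CommLB

open CommLB Pointwise

/-- there is `C > 0`, depending only on `r`, such that for every `r×r`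
complex matrix `A` and every `B > 0`: if every eigenvalue `α` of `A` satisfies
`|α| < B` and `‖A‖² ≥ 2rB²`, then `‖[A,Aᴴ]‖ ≥ C·‖A‖²`. -/
theorem commutator_lower_bound_small_eigenvalues (r : ℕ) (hr : 2 ≤ r) :
    ∃ C : ℝ, 0 < C ∧
      ∀ A : Matrix (Fin r) (Fin r) ℂ, ∀ B : ℝ, 0 < B →
        (∀ α ∈ spectrum ℂ A, ‖α‖ < B) →
        2 * r * B ^ 2 ≤ frobNorm A ^ 2 →
        C * frobNorm A ^ 2 ≤ frobNorm (A * A.conjTranspose - A.conjTranspose * A) := by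
  classical
  have hrpos : (0:ℝ) < r := by
    have : (2:ℝ) ≤ r := by exact_mod_cast hr
    linarith
  set c : ℝ := Real.sqrt (1 / (2 * r)) with hcdef
  have hcpos : 0 < c := Real.sqrt_pos.mpr (by positivity)
  have hc2 : c ^ 2 = 1 / (2 * r) := Real.sq_sqrt (by positivity)
  set S : Set (Matrix (Fin r) (Fin r) ℂ) :=
    {A | frobNorm A ^ 2 = 1 ∧ ∀ z : ℂ, c < ‖z‖ →
      (‖z‖ - c) ^ r ≤ ‖(z • (1 : Matrix (Fin r) (Fin r) ℂ) - A).det‖}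
    with hSdef
  -- S is closed
  have hSclosed : IsClosed S := by
    have hS1 : IsClosed {A : Matrix (Fin r) (Fin r) ℂ | frobNorm A ^ 2 = 1} :=
      isClosed_eq (continuous_frobNorm.pow 2) continuous_const
    have hS2 : IsClosed {A : Matrix (Fin r) (Fin r) ℂ | ∀ z : ℂ, c < ‖z‖ →
        (‖z‖ - c) ^ r ≤ ‖(z • (1 : Matrix (Fin r) (Fin r) ℂ) - A).det‖} := by
      have : {A : Matrix (Fin r) (Fin r) ℂ | ∀ z : ℂ, c < ‖z‖ →
          (‖z‖ - c) ^ r ≤ ‖(z • (1 : Matrix (Fin r) (Fin r) ℂ) - A).det‖}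
          = ⋂ z : ℂ, {A : Matrix (Fin r) (Fin r) ℂ | c < ‖z‖ →
            (‖z‖ - c) ^ r ≤ ‖(z • (1 : Matrix (Fin r) (Fin r) ℂ) - A).det‖} := by
        ext A; simp [Set.mem_iInter]
      rw [this]
      refine isClosed_iInter fun z => ?_
      by_cases hz : c < ‖z‖
      · have heq : {A : Matrix (Fin r) (Fin r) ℂ | c < ‖z‖ →
            (‖z‖ - c) ^ r ≤ ‖(z • (1 : Matrix (Fin r) (Fin r) ℂ) - A).det‖}
            = {A : Matrix (Fin r) (Fin r) ℂ |
            (‖z‖ - c) ^ r ≤ ‖(z • (1 : Matrix (Fin r) (Fin r) ℂ) - A).det‖} := by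
          ext A; simp [hz]
        rw [heq]
        apply isClosed_le continuous_const
        exact continuous_norm.comp ((continuous_const.sub continuous_id).matrix_det)
      · have heq : {A : Matrix (Fin r) (Fin r) ℂ | c < ‖z‖ →
            (‖z‖ - c) ^ r ≤ ‖(z • (1 : Matrix (Fin r) (Fin r) ℂ) - A).det‖}
            = Set.univ := by
          ext A; simp [hz]
        rw [heq]; exact isClosed_univ
    have : S = {A : Matrix (Fin r) (Fin r) ℂ | frobNorm A ^ 2 = 1} ∩
        {A : Matrix (Fin r) (Fin r) ℂ | ∀ z : ℂ, c < ‖z‖ →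
        (‖z‖ - c) ^ r ≤ ‖(z • (1 : Matrix (Fin r) (Fin r) ℂ) - A).det‖} := by
      ext A; simp [hSdef, Set.mem_setOf_eq]
    rw [this]
    exact hS1.inter hS2
  -- S is contained in the compact set of matrices with small entries
  have hSsub : S ⊆ {A : Matrix (Fin r) (Fin r) ℂ | ∀ i j, ‖A i j‖ ≤ 1} := by
    intro A hA i j
    have h1 : ‖A i j‖ ^ 2 ≤ ∑ j', ‖A i j'‖ ^ 2 :=
      Finset.single_le_sum (f := fun j' => ‖A i j'‖ ^ 2)
        (fun _ _ => sq_nonneg _) (Finset.mem_univ j)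
    have h2 : (∑ j', ‖A i j'‖ ^ 2) ≤ ∑ i', ∑ j', ‖A i' j'‖ ^ 2 :=
      Finset.single_le_sum (f := fun i' => ∑ j', ‖A i' j'‖ ^ 2)
        (fun _ _ => Finset.sum_nonneg fun _ _ => sq_nonneg _) (Finset.mem_univ i)
    have h3 : ‖A i j‖ ^ 2 ≤ 1 := by
      have := hA.1
      rw [frobNorm_sq] at this
      calc ‖A i j‖ ^ 2 ≤ _ := h1
        _ ≤ _ := h2
        _ = 1 := this
    nlinarith [norm_nonneg (A i j)]
  have hScompact : IsCompact S := isCompact_entries_le.of_isClosed_subset hSclosed hSsub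
  -- S is nonempty
  have hSne : S.Nonempty := by
    set i0 : Fin r := ⟨0, by omega⟩
    set i1 : Fin r := ⟨1, by omega⟩
    have hne : i0 ≠ i1 := by
      intro h
      have := congrArg Fin.val h
      simp [i0, i1] at this
    set E : Matrix (Fin r) (Fin r) ℂ :=
      Matrix.of fun i j => if i = i0 ∧ j = i1 then (1:ℂ) else 0 with hEdef
    refine ⟨E, ?_, ?_⟩
    · -- frobNorm E ^ 2 = 1
      rw [frobNorm_sq]
      have hterm : ∀ i j, ‖E i j‖ ^ 2 = if i = i0 ∧ j = i1 then (1:ℝ) else 0 := by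
        intro i j
        by_cases h : i = i0 ∧ j = i1 <;> simp [hEdef, h]
      have : ∀ i, (∑ j, ‖E i j‖ ^ 2) = if i = i0 then (1:ℝ) else 0 := by
        intro i
        rw [Finset.sum_congr rfl fun j _ => hterm i j]
        by_cases h : i = i0 <;> simp [h]
      rw [Finset.sum_congr rfl fun i _ => this i]
      simp
    · -- det condition
      intro z hz
      have hdet : (z • (1 : Matrix (Fin r) (Fin r) ℂ) - E).det = z ^ r := by
        have htri : (z • (1 : Matrix (Fin r) (Fin r) ℂ) - E).BlockTriangular id := by
          intro i j hij
          have hij' : (j : Fin r) < i := hij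
          have hne2 : i ≠ j := (ne_of_gt hij')
          have hE0 : E i j = 0 := by
            simp only [hEdef, Matrix.of_apply, ite_eq_right_iff, one_ne_zero]
            rintro ⟨rfl, rfl⟩
            have : (i1 : Fin r) < i0 := hij'
            have := Fin.lt_iff_val_lt_val.mp this
            simp [i0, i1] at this
          simp [Matrix.sub_apply, Matrix.smul_apply, Matrix.one_apply_ne hne2, hE0]
        rw [Matrix.det_of_upperTriangular htri]
        have hdiag : ∀ i, (z • (1 : Matrix (Fin r) (Fin r) ℂ) - E) i i = z := by
          intro i
          have hE0 : E i i = 0 := by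
            simp only [hEdef, Matrix.of_apply, ite_eq_right_iff, one_ne_zero]
            rintro ⟨rfl, h⟩
            exact hne h
          simp [Matrix.sub_apply, Matrix.smul_apply, Matrix.one_apply_eq, hE0]
        rw [Finset.prod_congr rfl fun i _ => hdiag i]
        simp
      rw [hdet]
      rw [norm_pow]
      apply pow_le_pow_left₀ (by linarith)
      linarith
  -- minimize the commutator norm over S
  obtain ⟨A₀, hA₀S, hmin⟩ := hScompact.exists_isMinOn hSne continuous_comm.continuousOn
  set C : ℝ := frobNorm (A₀ * A₀.conjTranspose - A₀.conjTranspose * A₀) with hCdef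
  -- spectral bound for members of S
  have hspec_of_S : ∀ A ∈ S, ∀ α ∈ spectrum ℂ A, ‖α‖ ≤ c := by
    intro A hA α hα
    by_contra hgt
    push_neg at hgt
    have hdet0 : ((α : ℂ) • (1 : Matrix (Fin r) (Fin r) ℂ) - A).det = 0 :=
      mem_spectrum_iff_det.mp hα
    have := hA.2 α hgt
    rw [hdet0] at this
    simp only [norm_zero] at this
    have : (0:ℝ) < (‖α‖ - c) ^ r := pow_pos (by linarith) r
    linarith
  -- C is positive
  have hCpos : 0 < C := by
    rcases lt_or_eq_of_le (frobNorm_nonneg (A₀ * A₀.conjTranspose - A₀.conjTranspose * A₀)) with h | h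
    · exact h
    · exfalso
      have hcomm0 : A₀ * A₀.conjTranspose - A₀.conjTranspose * A₀ = 0 :=
        eq_zero_of_frobNorm_eq_zero h.symm
      have hnormal : A₀ * A₀.conjTranspose = A₀.conjTranspose * A₀ := sub_eq_zero.mp hcomm0
      have hbound := normal_frobSq_le hnormal hcpos.le (hspec_of_S A₀ hA₀S)
      have h1 : (∑ i, ∑ j, ‖A₀ i j‖ ^ 2) = 1 := by
        rw [← frobNorm_sq]; exact hA₀S.1
      rw [h1, hc2] at hbound
      have : (r : ℝ) * (1 / (2 * r)) = 1 / 2 := by field_simp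
      rw [this] at hbound
      linarith
  refine ⟨C, hCpos, ?_⟩
  intro A B hB hspec hfrob
  set t : ℝ := frobNorm A with htdef
  have ht2 : 2 * r * B ^ 2 ≤ t ^ 2 := hfrob
  have htpos : 0 < t := by
    rcases lt_or_eq_of_le (frobNorm_nonneg A) with h | h
    · exact h
    · exfalso
      have ht0 : t ^ 2 = 0 := by rw [htdef, ← h]; ring
      nlinarith [ht2, ht0, hrpos, pow_pos hB 2]
  set Ah : Matrix (Fin r) (Fin r) ℂ := ((t⁻¹ : ℝ) : ℂ) • A with hAhdef
  have hAh1 : frobNorm Ah ^ 2 = 1 := by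
    rw [hAhdef, frobNorm_smul, abs_of_pos (by positivity)]
    field_simp
    rfl
  -- eigenvalue bound for Ah
  have hBtc : B ≤ t * c := by
    have hc2' : 2 * (r:ℝ) * c ^ 2 = 1 := by
      rw [hc2]; field_simp
    have hsq : B ^ 2 ≤ (t * c) ^ 2 := by
      nlinarith [mul_le_mul_of_nonneg_right ht2 (sq_nonneg c)]
    calc B = Real.sqrt (B ^ 2) := (Real.sqrt_sq hB.le).symm
      _ ≤ Real.sqrt ((t * c) ^ 2) := Real.sqrt_le_sqrt hsq
      _ = t * c := Real.sqrt_sq (by positivity)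
  have hspecAh : ∀ α ∈ spectrum ℂ Ah, ‖α‖ ≤ c := by
    intro α hα
    set u : ℂˣ := Units.mk0 ((t⁻¹ : ℝ) : ℂ) (by
      simp only [ne_eq, Complex.ofReal_eq_zero]
      positivity) with hudef
    have hsmul : spectrum ℂ (u • A) = u • spectrum ℂ A := spectrum.unit_smul_eq_smul A u
    have hAh_eq : Ah = u • A := by rw [hAhdef, Units.smul_def]; rfl
    rw [hAh_eq, hsmul] at hα
    obtain ⟨β, hβ, rfl⟩ := hα
    have hβB : ‖β‖ < B := hspec β hβ
    have habs : ‖u • β‖ = t⁻¹ * ‖β‖ := by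
      rw [Units.smul_def, smul_eq_mul, norm_mul]
      congr 1
      rw [hudef]
      simp only [Units.val_mk0, Complex.norm_real, Real.norm_eq_abs]
      rw [abs_of_pos (by positivity)]
    show ‖u • β‖ ≤ c
    rw [habs]
    have h1 : t⁻¹ * ‖β‖ ≤ t⁻¹ * B :=
      mul_le_mul_of_nonneg_left hβB.le (by positivity)
    have h2 : t⁻¹ * B ≤ c := by
      have := mul_le_mul_of_nonneg_left hBtc (le_of_lt (show (0:ℝ) < t⁻¹ by positivity))
      calc t⁻¹ * B ≤ t⁻¹ * (t * c) := this
        _ = c := by field_simp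
    linarith
  have hAhS : Ah ∈ S := by
    refine ⟨hAh1, ?_⟩
    intro z hz
    exact det_lower_bound Ah hcpos.le hspecAh hz
  have hminAh : C ≤ frobNorm (Ah * Ah.conjTranspose - Ah.conjTranspose * Ah) :=
    isMinOn_iff.mp hmin Ah hAhS
  -- commutator scaling
  have hconj : Ah.conjTranspose = ((t⁻¹ : ℝ) : ℂ) • A.conjTranspose := by
    rw [hAhdef, Matrix.conjTranspose_smul]
    congr 1
    rw [Complex.star_def, Complex.conj_ofReal]
  have hcommeq : Ah * Ah.conjTranspose - Ah.conjTranspose * Ah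
      = ((t⁻¹ * t⁻¹ : ℝ) : ℂ) • (A * A.conjTranspose - A.conjTranspose * A) := by
    rw [hAhdef, hconj]
    rw [Matrix.smul_mul, Matrix.mul_smul, Matrix.smul_mul, Matrix.mul_smul]
    rw [smul_smul, smul_smul, ← smul_sub]
    congr 1
    rw [Complex.ofReal_mul]
  have hfrobAh : frobNorm (Ah * Ah.conjTranspose - Ah.conjTranspose * Ah)
      = (t⁻¹ * t⁻¹) * frobNorm (A * A.conjTranspose - A.conjTranspose * A) := by
    rw [hcommeq, frobNorm_smul, abs_of_pos (by positivity)]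
  rw [hfrobAh] at hminAh
  have hfinal := mul_le_mul_of_nonneg_left hminAh (le_of_lt (show (0:ℝ) < t ^ 2 by positivity))
  calc C * frobNorm A ^ 2 = t ^ 2 * C := by rw [← htdef]; ring
    _ ≤ t ^ 2 * (t⁻¹ * t⁻¹ * frobNorm (A * A.conjTranspose - A.conjTranspose * A)) := hfinal
    _ = frobNorm (A * A.conjTranspose - A.conjTranspose * A) := by
        field_simp
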